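/- For exchangeable, almost surely distinct random variables V_1,...,V_{n+1}, the rank R of V_{n+1} among all n+1 values is uniformly distributed on {1,...,n+1}. -/

import Mathlib

open MeasureTheory
open scoped ENNReal

/-- Exchangeability: the joint law is invariant under permutations of the indices. -/
def Exchangeable {Ω : Type*} [MeasurableSpace Ω] (P : Measure Ω)
    {n : ℕ} {β : Type*} [MeasurableSpace β] (Z : Fin n → Ω → β) : Prop :=
  ∀ π : Equiv.Perm (Fin n),
    Measure.map (fun ω => fun i => Z (π i) ω) P = Measure.map (fun ω => fun i => Z i ω) P

noncomputable def rnk {n : ℕ} (j : Fin (n + 1)) (v : Fin (n + 1) → ℝ) : ℕ :=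
  Set.ncard {i | v i ≤ v j}

lemma rnk_eq_sum {n : ℕ} (j : Fin (n + 1)) (v : Fin (n + 1) → ℝ) :
    rnk j v = ∑ i : Fin (n + 1), if v i ≤ v j then 1 else 0 := by
  classical
  rw [rnk, Set.ncard_eq_toFinset_card', Set.toFinset_setOf, Finset.card_filter]

lemma measurable_rnk {n : ℕ} (j : Fin (n + 1)) : Measurable (rnk j) := by
  have : (rnk j : (Fin (n+1) → ℝ) → ℕ) =
      fun v => ∑ i : Fin (n + 1), if v i ≤ v j then 1 else 0 := funext (rnk_eq_sum j)
  rw [this]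
  exact Finset.measurable_sum _ fun i _ =>
    Measurable.ite (measurableSet_le (measurable_pi_apply i) (measurable_pi_apply j))
      measurable_const measurable_const

lemma rnk_perm {n : ℕ} (π : Equiv.Perm (Fin (n + 1))) (j : Fin (n + 1))
    (v : Fin (n + 1) → ℝ) : rnk j (fun i => v (π i)) = rnk (π j) v := by
  have h : {i | v (π i) ≤ v (π j)} = π.symm '' {i | v i ≤ v (π j)} := by
    rw [Equiv.image_eq_preimage_symm]
    simp [Set.preimage_setOf_eq]
  rw [rnk, h, Set.ncard_image_of_injective _ π.symm.injective, rnk]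

lemma rnk_injective {n : ℕ} {v : Fin (n + 1) → ℝ} (hv : Function.Injective v) :
    Function.Injective (fun j => rnk j v) := by
  have key : ∀ j k : Fin (n + 1), v j < v k → rnk j v < rnk k v := by
    intro j k hjk
    apply Set.ncard_lt_ncard _ (Set.toFinite _)
    constructor
    · intro i hi; exact le_of_lt (lt_of_le_of_lt hi hjk)
    · intro hsub
      exact absurd (hsub (le_refl (v k))) (not_le.mpr hjk)
  intro j k h
  rcases lt_trichotomy (v j) (v k) with h1 | h1 | h1
  · exact absurd h (ne_of_lt (key _ _ h1))
  · exact hv h1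
  · exact absurd h.symm (ne_of_lt (key _ _ h1))

lemma rnk_mem {n : ℕ} (j : Fin (n + 1)) (v : Fin (n + 1) → ℝ) :
    rnk j v ∈ Finset.Icc 1 (n + 1) := by
  rw [Finset.mem_Icc]
  constructor
  · have : ({i | v i ≤ v j} : Set (Fin (n+1))).Nonempty := ⟨j, by simp⟩
    have := (Set.ncard_pos (Set.toFinite _)).mpr this
    exact this
  · calc rnk j v ≤ (Set.univ : Set (Fin (n+1))).ncard :=
        Set.ncard_le_ncard (Set.subset_univ _) Set.finite_univ
    _ = n + 1 := by simp [Set.ncard_univ]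

lemma existsUnique_rnk {n : ℕ} {v : Fin (n + 1) → ℝ} (hv : Function.Injective v)
    {r : ℕ} (hr : 1 ≤ r) (hr' : r ≤ n + 1) : ∃! j, rnk j v = r := by
  classical
  have himg : Finset.image (fun j => rnk j v) Finset.univ = Finset.Icc 1 (n + 1) := by
    apply Finset.eq_of_subset_of_card_le
    · intro x hx
      rcases Finset.mem_image.mp hx with ⟨j, _, rfl⟩
      exact rnk_mem j v
    · rw [Finset.card_image_of_injective _ (rnk_injective hv), Finset.card_univ,
        Nat.card_Icc]
      simp
  have : r ∈ Finset.image (fun j => rnk j v) Finset.univ := by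
    rw [himg, Finset.mem_Icc]; exact ⟨hr, hr'⟩
  rcases Finset.mem_image.mp this with ⟨j, _, hj⟩
  exact ⟨j, hj, fun k hk => rnk_injective hv (hk.trans hj.symm)⟩

theorem rank_uniform'
    {Ω : Type*} [MeasurableSpace Ω] (P : Measure Ω) [IsProbabilityMeasure P]
    (n : ℕ) (V : Fin (n + 1) → Ω → ℝ) (hmeas : ∀ i, Measurable (V i))
    (hexch : ∀ π : Equiv.Perm (Fin (n+1)),
      Measure.map (fun ω => fun i => V (π i) ω) P = Measure.map (fun ω => fun i => V i ω) P)
    (hdist : ∀ᵐ ω ∂P, Function.Injective (fun i => V i ω)) :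
    ∀ r : ℕ, 1 ≤ r → r ≤ n + 1 →
      P {ω | Set.ncard {i : Fin (n + 1) | V i ω ≤ V (Fin.last n) ω} = r}
        = (↑(n + 1) : ℝ≥0∞)⁻¹ := by
  intro r hr hr'
  classical
  set W : Ω → Fin (n + 1) → ℝ := fun ω i => V i ω with hW
  have hWmeas : Measurable W := measurable_pi_lambda _ hmeas
  set E : Fin (n + 1) → Set Ω := fun j => W ⁻¹' (rnk j ⁻¹' {r}) with hE
  have hEmeas : ∀ j, MeasurableSet (E j) := fun j =>
    hWmeas ((measurable_rnk j) (measurableSet_singleton r))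
  -- Step A: all E j have the same measure
  have stepA : ∀ j, P (E j) = P (E (Fin.last n)) := by
    intro j
    have hπ := hexch (Equiv.swap j (Fin.last n))
    set π := Equiv.swap j (Fin.last n) with hπdef
    have hmeas' : Measurable (fun ω => fun i => V (π i) ω) :=
      measurable_pi_lambda _ fun i => hmeas (π i)
    have hA : MeasurableSet (rnk (Fin.last n) ⁻¹' ({r} : Set ℕ)) :=
      (measurable_rnk _) (measurableSet_singleton r)
    have h1 := congrArg (fun μ => μ (rnk (Fin.last n) ⁻¹' ({r} : Set ℕ))) hπ
    rw [Measure.map_apply hmeas' hA, Measure.map_apply hWmeas hA] at h1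
    have hpre : (fun ω => fun i => V (π i) ω) ⁻¹' (rnk (Fin.last n) ⁻¹' {r}) = E j := by
      ext ω
      simp only [Set.mem_preimage, Set.mem_singleton_iff, hE]
      have : rnk (Fin.last n) (fun i => V (π i) ω) = rnk (π (Fin.last n)) (W ω) :=
        rnk_perm π (Fin.last n) (W ω)
      rw [this]
      have : π (Fin.last n) = j := Equiv.swap_apply_right _ _
      rw [this]
    rw [hpre] at h1
    exact h1
  -- Step B: the sum over j is 1
  have stepB : ∑ j : Fin (n + 1), P (E j) = 1 := by
    have h1 : ∑ j : Fin (n + 1), P (E j)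
        = ∫⁻ ω, ∑ j : Fin (n + 1), (E j).indicator (fun _ => (1 : ℝ≥0∞)) ω ∂P := by
      rw [lintegral_finset_sum _ fun j _ =>
        measurable_const.indicator (hEmeas j)]
      exact Finset.sum_congr rfl fun j _ => (lintegral_indicator_one (hEmeas j)).symm
    rw [h1]
    have h2 : ∀ᵐ ω ∂P,
        ∑ j : Fin (n + 1), (E j).indicator (fun _ => (1 : ℝ≥0∞)) ω = 1 := by
      filter_upwards [hdist] with ω hω
      obtain ⟨j₀, hj₀, huniq⟩ := existsUnique_rnk hω hr hr'
      have : ∀ j : Fin (n + 1),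
          (E j).indicator (fun _ => (1 : ℝ≥0∞)) ω = if j = j₀ then 1 else 0 := by
        intro j
        by_cases h : j = j₀
        · subst h
          simp [Set.indicator_of_mem, hE, Set.mem_preimage, hj₀]
          exact hj₀
        · have : ω ∉ E j := by
            intro hmem
            exact h (huniq j hmem)
          simp [Set.indicator_of_notMem this, h]
      simp [this]
    rw [lintegral_congr_ae h2]
    simp
  have hsum : (↑(n + 1) : ℝ≥0∞) * P (E (Fin.last n)) = 1 := by
    rw [← stepB, Finset.sum_congr rfl fun j _ => stepA j, Finset.sum_const,
      Finset.card_univ, Fintype.card_fin, nsmul_eq_mul]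
  have hne : (↑(n + 1) : ℝ≥0∞) ≠ 0 := by simp
  have hnt : (↑(n + 1) : ℝ≥0∞) ≠ ⊤ := by simp
  have h2 : (↑(n + 1) : ℝ≥0∞)⁻¹ * ((↑(n + 1) : ℝ≥0∞) * P (E (Fin.last n)))
      = (↑(n + 1) : ℝ≥0∞)⁻¹ := by rw [hsum, mul_one]
  rwa [← mul_assoc, ENNReal.inv_mul_cancel hne hnt, one_mul] at h2


/-- For exchangeable, almost surely distinct random variables `V_1, …, V_{n+1}`,
the rank `R = #{i : V_i ≤ V_{n+1}}` of the last variable is uniform on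
`{1, …, n+1}`. -/
theorem rank_uniform
    {Ω : Type*} [MeasurableSpace Ω] (P : Measure Ω) [IsProbabilityMeasure P]
    (n : ℕ) (V : Fin (n + 1) → Ω → ℝ) (hmeas : ∀ i, Measurable (V i))
    (hexch : Exchangeable P V)
    (hdist : ∀ᵐ ω ∂P, Function.Injective (fun i => V i ω)) :
    ∀ r : ℕ, 1 ≤ r → r ≤ n + 1 →
      P {ω | Set.ncard {i : Fin (n + 1) | V i ω ≤ V (Fin.last n) ω} = r}
        = (↑(n + 1) : ℝ≥0∞)⁻¹ :=
  rank_uniform' P n V hmeas hexch hdist
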